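/- For every x > 0, the derivative of K₀ at x equals −K₁(x), i.e. K₀'(x) = −K₁(x). -/

import Mathlib

open Real MeasureTheory Set

/-- The modified Bessel function of the second kind of order zero,
`K₀(x) = ∫₀^∞ exp (−x cosh t) dt`. -/
noncomputable def K0 (x : ℝ) : ℝ := ∫ t in Ioi (0:ℝ), Real.exp (-x * Real.cosh t)

/-- The modified Bessel function of the second kind of order one,
`K₁(x) = ∫₀^∞ exp (−x cosh t) cosh t dt`. -/
noncomputable def K1 (x : ℝ) : ℝ :=
  ∫ t in Ioi (0:ℝ), Real.exp (-x * Real.cosh t) * Real.cosh t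

lemma self_le_cosh {t : ℝ} (ht : 0 ≤ t) : t ≤ Real.cosh t := by
  rcases eq_or_lt_of_le ht with h | h
  · simp [← h, (Real.cosh_pos (0:ℝ)).le]
  · have h1 : t ≤ Real.sinh t := (Real.self_lt_sinh_iff.2 h).le
    have h2 : Real.sinh t ≤ Real.cosh t := by
      have := Real.cosh_sub_sinh t
      nlinarith [Real.exp_pos (-t)]
    linarith

lemma K0_integrand_integrable {c : ℝ} (hc : 0 < c) :
    IntegrableOn (fun t : ℝ => Real.exp (-c * Real.cosh t)) (Ioi 0) := by
  refine (exp_neg_integrableOn_Ioi 0 hc).mono' ?_ ?_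
  · exact (Real.continuous_exp.comp ((continuous_const.mul Real.continuous_cosh))).aestronglyMeasurable
  · filter_upwards [ae_restrict_mem measurableSet_Ioi] with t ht
    rw [Real.norm_eq_abs, abs_of_pos (Real.exp_pos _)]
    apply Real.exp_le_exp.2
    have := self_le_cosh (le_of_lt ht)
    nlinarith

lemma K1_integrand_integrable {c : ℝ} (hc : 0 < c) :
    IntegrableOn (fun t : ℝ => Real.cosh t * Real.exp (-c * Real.cosh t)) (Ioi 0) := by
  refine (((K0_integrand_integrable (half_pos hc)).const_mul (2 / c))).mono' ?_ ?_
  · exact (Real.continuous_cosh.mul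
      (Real.continuous_exp.comp (continuous_const.mul Real.continuous_cosh))).aestronglyMeasurable
  · filter_upwards [ae_restrict_mem measurableSet_Ioi] with t _
    have hcosh : 0 < Real.cosh t := Real.cosh_pos t
    rw [Real.norm_eq_abs, abs_of_pos (by positivity)]
    have key : Real.cosh t ≤ (2 / c) * Real.exp (c / 2 * Real.cosh t) := by
      have h1 : c / 2 * Real.cosh t ≤ Real.exp (c / 2 * Real.cosh t) :=
        (Real.add_one_le_exp _).trans' (by linarith)
      calc Real.cosh t = (2 / c) * (c / 2 * Real.cosh t) := by field_simp
        _ ≤ (2 / c) * Real.exp (c / 2 * Real.cosh t) := by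
            apply mul_le_mul_of_nonneg_left h1 (by positivity)
    calc Real.cosh t * Real.exp (-c * Real.cosh t)
        ≤ ((2 / c) * Real.exp (c / 2 * Real.cosh t)) * Real.exp (-c * Real.cosh t) := by
          apply mul_le_mul_of_nonneg_right key (Real.exp_pos _).le
      _ = (2 / c) * Real.exp (-(c / 2) * Real.cosh t) := by
          rw [mul_assoc, ← Real.exp_add]; ring_nf

/-- For every `x > 0`, `K₀'(x) = −K₁(x)`. -/
theorem deriv_K0 (x : ℝ) (hx : 0 < x) : deriv K0 x = -K1 x := by
  set μ := volume.restrict (Ioi (0:ℝ))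
  have main :
      HasDerivAt (fun y => ∫ t, Real.exp (-y * Real.cosh t) ∂μ)
        (∫ t, -Real.cosh t * Real.exp (-x * Real.cosh t) ∂μ) x := by
    have := hasDerivAt_integral_of_dominated_loc_of_deriv_le (μ := μ)
      (F := fun y t => Real.exp (-y * Real.cosh t))
      (F' := fun y t => -Real.cosh t * Real.exp (-y * Real.cosh t))
      (x₀ := x) (bound := fun t => Real.cosh t * Real.exp (-(x / 2) * Real.cosh t))
      (Metric.ball_mem_nhds x (half_pos hx))
      (Filter.Eventually.of_forall fun y =>
        (Real.continuous_exp.comp (continuous_const.mul Real.continuous_cosh)).aestronglyMeasurable)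
      (K0_integrand_integrable hx)
      (((Real.continuous_cosh.neg).mul
        (Real.continuous_exp.comp (continuous_const.mul Real.continuous_cosh))).aestronglyMeasurable)
      ?_ (K1_integrand_integrable (half_pos hx)) ?_
    · exact this.2
    · filter_upwards [ae_restrict_mem measurableSet_Ioi] with t _
      intro y hy
      rw [Metric.mem_ball, Real.dist_eq, abs_lt] at hy
      have hy' : x / 2 < y := by linarith
      have hcosh : 0 < Real.cosh t := Real.cosh_pos t
      rw [Real.norm_eq_abs, abs_of_nonpos (by nlinarith [Real.exp_pos (-y * Real.cosh t)]),
        neg_mul, neg_neg]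
      apply mul_le_mul_of_nonneg_left _ hcosh.le
      apply Real.exp_le_exp.2
      nlinarith
    · filter_upwards with t
      intro y _
      have : HasDerivAt (fun y : ℝ => -y * Real.cosh t) (-Real.cosh t) y := by
        simpa using ((hasDerivAt_id y).neg.mul_const (Real.cosh t))
      simpa [mul_comm] using this.exp
  have hK1 : ∫ t, -Real.cosh t * Real.exp (-x * Real.cosh t) ∂μ = -K1 x := by
    rw [K1, ← integral_neg]
    congr 1 with t; ring
  rw [← hK1]
  exact (main.congr_deriv rfl).deriv
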